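/- arXiv:0804.0547 — 2 statements merged into one kernel-verified Lean document; each statement's English description precedes it below -/
import Mathlib

section
/- Let W ⊆ V_d be a P-submodule. If f_0 + f_1 z + ⋯ + f_m z^m ∈ W, where f_i ∈ S^{d−i}(V_1) for each i, then f_i z^i ∈ W for all i ≥ 0. Equivalently, as k-vector spaces, W = ⊕_{i=0}^{d−1} W ∩ (S^{d−i}(V_1) ⊗ z^i). -/
/-!
The `P`-module `V_d` underlying the syzygy bundle on `P^n_k` (Trivedi).
`G = GL_{n+1}(k)` and `P ⊂ G` is the maximal parabolic subgroup (block upper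
triangular with blocks of sizes `1` and `n`) with `G/P ≅ P^n_k`; homogeneous
`G`-bundles on `P^n_k` correspond to finite dimensional `P`-modules.  Writing
`U₁` for the `k`-vector space with basis `x₁, …, x_n, z` (here the variables of
`MvPolynomial (Fin (n+1)) k`, with `z` the last variable) and
`V₁ = span(x₁, …, x_n)`, the group `P` acts on `U₁` by linear substitutions
preserving `V₁`, and hence on the degree-`d` polynomials `U_d = S^d(U₁)`.  The
`P`-module corresponding to the syzygy bundle `V_d` is
`V_d = ⊕_{i=0}^{d−1} S^{d−i}(V₁) ⊗ zⁱ ⊂ U_d`.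
-/

noncomputable section

open MvPolynomial

/-- The `P`-module `V_d = ⊕_{i=0}^{d-1} S^{d-i}(V₁)·zⁱ`: polynomials in
`x₁, …, x_n, z` all of whose monomials have total degree `d` and `z`-exponent
`< d`. -/
def VdMod (k : Type) [Field k] (n d : ℕ) :
    Submodule k (MvPolynomial (Fin (n + 1)) k) where
  carrier := {f | ∀ m ∈ f.support, (∑ j, m j) = d ∧ m (Fin.last n) < d}
  add_mem' := by
    intro f g hf hg m hm
    rcases Finset.mem_union.mp (MvPolynomial.support_add hm) with h | h
    · exact hf m h
    · exact hg m h
  zero_mem' := by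
    intro m hm
    simp at hm
  smul_mem' := by
    intro c f hf m hm
    exact hf m (MvPolynomial.support_smul hm)

/-- The subspace `(⋯)·zⁱ` of polynomials all of whose monomials have
`z`-exponent exactly `i`; thus `W ⊓ zSlice k n i` is the component
`W(i) = W ∩ (S^{d-i}(V₁) ⊗ zⁱ)` of a submodule `W ≤ V_d`. -/
def zSlice (k : Type) [Field k] (n i : ℕ) :
    Submodule k (MvPolynomial (Fin (n + 1)) k) where
  carrier := {f | ∀ m ∈ f.support, m (Fin.last n) = i}
  add_mem' := by
    intro f g hf hg m hm
    rcases Finset.mem_union.mp (MvPolynomial.support_add hm) with h | h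
    · exact hf m h
    · exact hg m h
  zero_mem' := by
    intro m hm
    simp at hm
  smul_mem' := by
    intro c f hf m hm
    exact hf m (MvPolynomial.support_smul hm)

/-- A matrix `M ∈ GL_{n+1}(k)` lies in (the image in `GL(U₁)` of) the maximal
parabolic `P` iff it is invertible and each `x`-variable is mapped into the span
of the `x`-variables (the substitution sends `X i ↦ ∑ j, M i j • X j`, so this
says `M i z = 0` for every `x`-index `i`); `z` itself may be sent to
`b·z + a₁x₁ + ⋯ + a_nx_n` with `b ≠ 0`. -/
def IsParabolicSubst {k : Type} [Field k] {n : ℕ}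
    (M : Matrix (Fin (n + 1)) (Fin (n + 1)) k) : Prop :=
  IsUnit M.det ∧ ∀ i : Fin (n + 1), i ≠ Fin.last n → M i (Fin.last n) = 0

/-- The algebra endomorphism of `k[x₁, …, x_n, z]` induced by the linear
substitution `X i ↦ ∑ j, M i j • X j`. -/
def substMap {k : Type} [Field k] {n : ℕ}
    (M : Matrix (Fin (n + 1)) (Fin (n + 1)) k) :
    MvPolynomial (Fin (n + 1)) k →ₐ[k] MvPolynomial (Fin (n + 1)) k :=
  MvPolynomial.aeval fun i => ∑ j, M i j • MvPolynomial.X j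

/-- `W` is a `P`-submodule of `V_d`: a `k`-subspace of `V_d` stable under all
parabolic substitutions. -/
def IsPSubmodule {k : Type} [Field k] {n : ℕ} (d : ℕ)
    (W : Submodule k (MvPolynomial (Fin (n + 1)) k)) : Prop :=
  W ≤ VdMod k n d ∧
    ∀ M : Matrix (Fin (n + 1)) (Fin (n + 1)) k,
      IsParabolicSubst M → ∀ f ∈ W, substMap M f ∈ W

/-- The part of `f` supported on monomials with `z`-exponent exactly `i`; for
`f = f₀ + f₁z + ⋯ + fₘzᵐ ∈ V_d` with `f_i ∈ S^{d-i}(V₁)`, `zComp i f = f_i zⁱ`. -/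
def zComp {k : Type} [Field k] {n : ℕ} (i : ℕ)
    (f : MvPolynomial (Fin (n + 1)) k) : MvPolynomial (Fin (n + 1)) k :=
  ∑ m ∈ f.support.filter fun m => m (Fin.last n) = i,
    MvPolynomial.monomial m (MvPolynomial.coeff m f)

lemma substMap_diagonal_monomial {k : Type} [Field k] {n : ℕ}
    (v : Fin (n + 1) → k) (m : Fin (n + 1) →₀ ℕ) (c : k) :
    substMap (Matrix.diagonal v) (MvPolynomial.monomial m c)
      = MvPolynomial.monomial m ((∏ j ∈ m.support, v j ^ m j) * c) := by
  have hX : ∀ i : Fin (n + 1),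
      (∑ j, Matrix.diagonal v i j • (MvPolynomial.X j : MvPolynomial (Fin (n + 1)) k))
        = MvPolynomial.C (v i) * MvPolynomial.X i := by
    intro i
    rw [Finset.sum_eq_single i]
    · rw [Matrix.diagonal_apply_eq, MvPolynomial.smul_eq_C_mul]
    · intro b _ hb
      rw [Matrix.diagonal_apply_ne' v hb, zero_smul]
    · simp
  unfold substMap
  rw [MvPolynomial.aeval_monomial]
  simp only [hX]
  rw [MvPolynomial.monomial_eq]
  unfold Finsupp.prod
  rw [Finset.prod_congr rfl (fun j _ => mul_pow (MvPolynomial.C (v j)) (MvPolynomial.X j) (m j)),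
    Finset.prod_mul_distrib]
  simp only [← MvPolynomial.C_pow]
  rw [← map_prod, MvPolynomial.algebraMap_eq, ← mul_assoc, ← MvPolynomial.C_mul, mul_comm c]

/-- diagonal substitution scaling only `z` by `t`. -/
def zScale {k : Type} [Field k] (n : ℕ) (t : k) :
    Matrix (Fin (n + 1)) (Fin (n + 1)) k :=
  Matrix.diagonal (fun i => if i = Fin.last n then t else 1)

lemma isParabolic_zScale {k : Type} [Field k] {n : ℕ} {t : k} (ht : t ≠ 0) :
    IsParabolicSubst (zScale n t) := by
  constructor
  · rw [zScale, Matrix.det_diagonal]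
    refine (Finset.prod_ne_zero_iff.mpr fun i _ => ?_).isUnit
    split <;> simp [ht]
  · intro i hi
    rw [zScale, Matrix.diagonal_apply_ne _ hi]

lemma substMap_zScale_monomial {k : Type} [Field k] {n : ℕ}
    (t : k) (m : Fin (n + 1) →₀ ℕ) (c : k) :
    substMap (zScale n t) (MvPolynomial.monomial m c)
      = MvPolynomial.monomial m (t ^ m (Fin.last n) * c) := by
  rw [zScale, substMap_diagonal_monomial]
  congr 1
  congr 1
  rw [Finset.prod_eq_single (Fin.last n)]
  · simp
  · intro b _ hb
    simp [hb]
  · intro h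
    rw [Finsupp.notMem_support_iff.mp h]
    simp

lemma substMap_zScale_eq_sum {k : Type} [Field k] {n d : ℕ}
    (t : k) (f : MvPolynomial (Fin (n + 1)) k) (hf : f ∈ VdMod k n d) :
    substMap (zScale n t) f = ∑ i ∈ Finset.range d, t ^ i • zComp i f := by
  conv_lhs => rw [← f.support_sum_monomial_coeff, map_sum]
  simp only [substMap_zScale_monomial]
  rw [← Finset.sum_fiberwise_of_maps_to (g := fun m => m (Fin.last n))
    (fun m hm => Finset.mem_range.mpr (hf m hm).2)]
  refine Finset.sum_congr rfl fun i _ => ?_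
  rw [zComp, Finset.smul_sum]
  refine Finset.sum_congr rfl fun m hm => ?_
  rw [MvPolynomial.smul_monomial, (Finset.mem_filter.mp hm).2, smul_eq_mul]

lemma sum_zComp {k : Type} [Field k] {n d : ℕ}
    (f : MvPolynomial (Fin (n + 1)) k) (hf : f ∈ VdMod k n d) :
    ∑ i ∈ Finset.range d, zComp i f = f := by
  have := substMap_zScale_eq_sum (1 : k) f hf
  simp only [one_pow, one_smul] at this
  rw [← this]
  conv_lhs => rw [← f.support_sum_monomial_coeff]
  rw [map_sum]
  simp only [substMap_zScale_monomial, one_pow, one_mul]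
  exact f.support_sum_monomial_coeff

lemma zComp_mem_zSlice {k : Type} [Field k] {n : ℕ} (i : ℕ)
    (f : MvPolynomial (Fin (n + 1)) k) : zComp i f ∈ zSlice k n i := by
  intro m hm
  classical
  have : MvPolynomial.coeff m (zComp i f) ≠ 0 := MvPolynomial.mem_support_iff.mp hm
  rw [zComp] at this
  by_contra hne
  apply this
  rw [MvPolynomial.coeff_sum]
  refine Finset.sum_eq_zero fun m' hm' => ?_
  rw [MvPolynomial.coeff_monomial, if_neg]
  rintro rfl
  exact hne (Finset.mem_filter.mp hm').2

lemma zComp_eq_zero {k : Type} [Field k] {n d : ℕ} (i : ℕ) (hi : d ≤ i)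
    (f : MvPolynomial (Fin (n + 1)) k) (hf : f ∈ VdMod k n d) :
    zComp i f = 0 := by
  rw [zComp, Finset.sum_eq_zero]
  intro m hm
  obtain ⟨hms, hmi⟩ := Finset.mem_filter.mp hm
  exact absurd (hmi ▸ (hf m hms).2) (by omega)

lemma zComp_mem {k : Type} [Field k] [Infinite k] {n d : ℕ} (hd : 0 < d)
    (W : Submodule k (MvPolynomial (Fin (n + 1)) k))
    (hW : IsPSubmodule d W) (f : MvPolynomial (Fin (n + 1)) k) (hf : f ∈ W)
    (i : ℕ) : zComp i f ∈ W := by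
  rcases le_or_gt d i with hi | hi
  · rw [zComp_eq_zero i hi f (hW.1 hf)]
    exact W.zero_mem
  -- choose d distinct nonzero scalars
  have hinf : ({0}ᶜ : Set k).Infinite := Set.Finite.infinite_compl (Set.finite_singleton 0)
  obtain ⟨s, hs, hc⟩ := hinf.exists_subset_card_eq d
  subst hc
  set v : Fin s.card → k := fun j => (s.equivFin.symm j).1 with hv
  have hvinj : Function.Injective v := Subtype.val_injective.comp s.equivFin.symm.injective
  have hvne : ∀ j, v j ≠ 0 := fun j => by simpa using hs (s.equivFin.symm j).2
  set A := Matrix.vandermonde v with hA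
  have hdet : IsUnit A.det := by
    rw [hA, Matrix.det_vandermonde]
    refine (Finset.prod_ne_zero_iff.mpr fun a _ => Finset.prod_ne_zero_iff.mpr
      fun b hb => sub_ne_zero_of_ne fun h => ?_).isUnit
    exact absurd (hvinj h) (Finset.mem_Ioi.mp hb).ne'
  set w : Fin s.card → MvPolynomial (Fin (n + 1)) k := fun l => zComp (l : ℕ) f with hw
  set u : Fin s.card → MvPolynomial (Fin (n + 1)) k :=
    fun j => substMap (zScale n (v j)) f with hu
  have hu_mem : ∀ j, u j ∈ W := fun j =>
    hW.2 _ (isParabolic_zScale (hvne j)) f hf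
  have hu_eq : ∀ j, u j = ∑ l, A j l • w l := by
    intro j
    show substMap (zScale n (v j)) f = ∑ l, A j l • w l
    rw [substMap_zScale_eq_sum (v j) f (hW.1 hf),
      ← Fin.sum_univ_eq_sum_range (fun l => v j ^ l • zComp l f) s.card]
    simp [hA, hw, Matrix.vandermonde_apply]
  have hw_mem : ∀ l, w l ∈ W := by
    intro l
    have key : w l = ∑ j, A⁻¹ l j • u j := by
      calc w l = ∑ l', (1 : Matrix (Fin s.card) (Fin s.card) k) l l' • w l' := by
            simp [Matrix.one_apply]
        _ = ∑ l', (A⁻¹ * A) l l' • w l' := by rw [Matrix.nonsing_inv_mul A hdet]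
        _ = ∑ j, A⁻¹ l j • u j := by
            simp only [Matrix.mul_apply, Finset.sum_smul, hu_eq, Finset.smul_sum,
              smul_smul]
            rw [Finset.sum_comm]
    rw [key]
    exact Submodule.sum_mem W fun j _ => W.smul_mem _ (hu_mem j)
  have := hw_mem ⟨i, hi⟩
  simpa [hw] using this

/-- Let `W ⊆ V_d` be a `P`-submodule.  If
`f = f₀ + f₁ z + ⋯ + fₘ zᵐ ∈ W` with `f_i ∈ S^{d−i}(V₁)`, then `f_i zⁱ ∈ W` for
all `i ≥ 0`; equivalently, as `k`-vector spaces,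
`W = ⊕_{i=0}^{d−1} W ∩ (S^{d−i}(V₁) ⊗ zⁱ)`. -/
theorem P_submodule_graded
    (k : Type) [Field k] [IsAlgClosed k] (p n d : ℕ) [CharP k p]
    (hp : 0 < p) (hn : 2 ≤ n) (hd : 0 < d)
    (W : Submodule k (MvPolynomial (Fin (n + 1)) k))
    (hW : IsPSubmodule d W) :
    (∀ f ∈ W, ∀ i : ℕ, zComp i f ∈ W) ∧
      W = ⨆ i ∈ Finset.range d, (W ⊓ zSlice k n i) := by
  have part1 : ∀ f ∈ W, ∀ i : ℕ, zComp i f ∈ W :=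
    fun f hf i => zComp_mem hd W hW f hf i
  refine ⟨part1, le_antisymm ?_ ?_⟩
  · intro f hf
    rw [← sum_zComp f (hW.1 hf)]
    refine Submodule.sum_mem _ fun i hi => ?_
    exact Submodule.mem_iSup_of_mem i
      (Submodule.mem_iSup_of_mem hi ⟨part1 f hf i, zComp_mem_zSlice i f⟩)
  · exact iSup₂_le fun i _ => inf_le_left
end
end

section
/- Let W ⊆ V_d be a P-submodule. Let i < d be a positive integer with p-adic expansion i = i_0 + i_1 p + ⋯ + i_m p^m (0 ≤ i_j ≤ p−1), and suppose f ∈ S^{d−i}(V_1) is a homogeneous polynomial with f·z^i ∈ W. Let k ≤ i be a nonnegative integer whose p-adic digits k_j satisfy 0 ≤ k_j ≤ i_j for all j, and let x_1^{T_1}⋯x_n^{T_n} be a monomial of degree i − k such that, writing T_l = Σ_j t_{jl} p^j with 0 ≤ t_{jl} ≤ p−1, one has t_{j1} + ⋯ + t_{jn} = i_j − k_j for each j. Then f·x_1^{T_1}⋯x_n^{T_n}·z^k ∈ W. -/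
/-!
The `P`-module `V_d` underlying the syzygy bundle on `P^n_k` (Trivedi).
`G = GL_{n+1}(k)` and `P ⊂ G` is the maximal parabolic subgroup (block upper
triangular with blocks of sizes `1` and `n`) with `G/P ≅ P^n_k`; homogeneous
`G`-bundles on `P^n_k` correspond to finite dimensional `P`-modules.  Writing
`U₁` for the `k`-vector space with basis `x₁, …, x_n, z` (here the variables of
`MvPolynomial (Fin (n+1)) k`, with `z` the last variable) and
`V₁ = span(x₁, …, x_n)`, the group `P` acts on `U₁` by linear substitutions
preserving `V₁`, and hence on the degree-`d` polynomials `U_d = S^d(U₁)`.  The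
`P`-module corresponding to the syzygy bundle `V_d` is
`V_d = ⊕_{i=0}^{d−1} S^{d−i}(V₁) ⊗ zⁱ ⊂ U_d`.
-/

noncomputable section

open MvPolynomial

/-- The `j`-th digit of the `p`-adic expansion of `i`. -/
def pDigit (p j i : ℕ) : ℕ := i / p ^ j % p

/-- `f` lies in `S^t(V₁)`: it is a polynomial in the `x`-variables only
(no `z`), homogeneous of degree `t`. -/
def IsXHomog {k : Type} [Field k] {n : ℕ} (t : ℕ)
    (f : MvPolynomial (Fin (n + 1)) k) : Prop :=
  ∀ m ∈ f.support, m (Fin.last n) = 0 ∧ (∑ j, m j) = t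


/- ### Auxiliary lemmas ### -/



lemma pDigit_zero' (p a : ℕ) : pDigit p 0 a = a % p := by simp [pDigit]

lemma pDigit_succ' (p j a : ℕ) : pDigit p (j+1) a = pDigit p j (a / p) := by
  simp [pDigit, Nat.div_div_eq_div_mul, pow_succ, mul_comm]

lemma pDigit_zero_right (p j : ℕ) : pDigit p j 0 = 0 := by simp [pDigit]

lemma eq_zero_of_pDigit_zero (p : ℕ) (hp : 2 ≤ p) :
    ∀ b : ℕ, (∀ j, pDigit p j b = 0) → b = 0 := by
  intro b
  induction b using Nat.strong_induction_on with
  | _ b ih =>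
    intro h
    rcases Nat.eq_zero_or_pos b with rfl | hb
    · rfl
    · have h0 : b % p = 0 := by simpa [pDigit_zero'] using h 0
      have hdiv : b / p = 0 := ih (b / p) (Nat.div_lt_self hb (by omega)) fun j => by
        simpa [pDigit_succ'] using h (j + 1)
      have := Nat.div_add_mod b p
      rw [hdiv] at this
      omega

lemma pDigit_sub (p : ℕ) (hp : 2 ≤ p) :
    ∀ a b : ℕ, (∀ j, pDigit p j b ≤ pDigit p j a) →
      b ≤ a ∧ ∀ j, pDigit p j (a - b) = pDigit p j a - pDigit p j b := by
  intro a
  induction a using Nat.strong_induction_on with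
  | _ a ih =>
    intro b h
    rcases Nat.eq_zero_or_pos a with rfl | ha
    · have hb : b = 0 := eq_zero_of_pDigit_zero p hp b fun j => by
        simpa [pDigit_zero_right] using h j
      subst hb
      exact ⟨le_rfl, fun j => by simp [pDigit_zero_right]⟩
    · have h0 : b % p ≤ a % p := by simpa [pDigit_zero'] using h 0
      obtain ⟨hle, hdig⟩ := ih (a / p) (Nat.div_lt_self ha (by omega)) (b / p)
        (fun j => by simpa [pDigit_succ'] using h (j + 1))
      have hda := Nat.div_add_mod a p
      have hdb := Nat.div_add_mod b p
      have hmul := Nat.mul_le_mul_left p hle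
      have hrp : a % p < p := Nat.mod_lt _ (by omega)
      have e1 : a / p = b / p + (a / p - b / p) := by omega
      have e2 : a % p = b % p + (a % p - b % p) := by omega
      have hkey : a = b + (p * (a / p - b / p) + (a % p - b % p)) := by
        calc a = p * (a / p) + a % p := hda.symm
        _ = p * (b / p + (a / p - b / p)) + (b % p + (a % p - b % p)) := by
              rw [← e1, ← e2]
        _ = (p * (b / p) + b % p) + (p * (a / p - b / p) + (a % p - b % p)) := by ring
        _ = b + (p * (a / p - b / p) + (a % p - b % p)) := by rw [hdb]
      have hab : a - b = p * (a / p - b / p) + (a % p - b % p) := by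
        conv_lhs => rw [hkey]
        simp
      have hm : (a - b) % p = a % p - b % p := by
        rw [hab, Nat.mul_add_mod]; exact Nat.mod_eq_of_lt (by omega)
      have hq : (a - b) / p = a / p - b / p := by
        rw [hab, Nat.mul_add_div (by omega)]
        have h5 : (a % p - b % p) / p = 0 := Nat.div_eq_of_lt (by omega)
        omega
      constructor
      · conv_rhs => rw [hkey]
        exact Nat.le_add_right _ _
      · intro j
        cases j with
        | zero => rw [pDigit_zero', pDigit_zero', pDigit_zero', hm]
        | succ j => rw [pDigit_succ', pDigit_succ', pDigit_succ', hq, hdig]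

lemma lucas_not_dvd {p : ℕ} (hp : p.Prime) {a b : ℕ}
    (h : ∀ j, pDigit p j b ≤ pDigit p j a) : ¬ p ∣ a.choose b := by
  haveI : Fact p.Prime := ⟨hp⟩
  have h2 := hp.two_le
  have ha : a < p ^ (a + b + 1) := lt_of_le_of_lt (by omega)
    (Nat.lt_pow_self (by omega))
  have hb : b < p ^ (a + b + 1) := lt_of_le_of_lt (by omega)
    (Nat.lt_pow_self (by omega))
  have mod := Choose.choose_modEq_prod_range_choose_nat (p := p) ha hb
  intro hdvd
  have hprod : p ∣ ∏ j ∈ Finset.range (a + b + 1),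
      (a / p ^ j % p).choose (b / p ^ j % p) := by
    have := (Nat.modEq_zero_iff_dvd.mpr hdvd).symm.trans mod
    exact Nat.modEq_zero_iff_dvd.mp this.symm
  obtain ⟨j, -, hj⟩ := (hp.prime.dvd_finset_prod_iff _).mp hprod
  have hba : b / p ^ j % p ≤ a / p ^ j % p := h j
  have hfac : p ∣ (a / p ^ j % p).factorial := by
    have := Nat.choose_mul_factorial_mul_factorial hba
    exact this ▸ (hj.mul_right _).mul_right _
  have : p ≤ a / p ^ j % p := (Nat.Prime.dvd_factorial hp).mp hfac
  have : a / p ^ j % p < p := Nat.mod_lt _ (by omega)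
  omega



-- Vandermonde extraction
lemma mem_of_all_comb {k M : Type*} [Field k] [AddCommGroup M] [Module k M]
    [Infinite k] (W : Submodule k M) (N : ℕ) (v : Fin N → M)
    (h : ∀ c : k, (∑ s : Fin N, c ^ (s : ℕ) • v s) ∈ W) : ∀ s, v s ∈ W := by
  classical
  intro s
  set e : ℕ ↪ k := Infinite.natEmbedding k with he
  set c : Fin N → k := fun t => e t with hc
  have hcinj : Function.Injective c := fun a b hab => Fin.ext (e.injective hab)
  set A := Matrix.vandermonde c with hA
  have hdet : A.det ≠ 0 := by
    rw [Ne, Matrix.det_vandermonde_eq_zero_iff]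
    rintro ⟨i, j, hval, hij⟩
    exact hij (hcinj hval)
  have hBA : A⁻¹ * A = 1 := Matrix.nonsing_inv_mul A (isUnit_iff_ne_zero.mpr hdet)
  have hv : v s = ∑ t, A⁻¹ s t • ∑ s', A t s' • v s' := by
    calc v s = ∑ s', (A⁻¹ * A) s s' • v s' := by
          rw [hBA]
          simp [Matrix.one_apply]
      _ = ∑ s', (∑ t, A⁻¹ s t * A t s') • v s' := by
          simp [Matrix.mul_apply]
      _ = ∑ t, A⁻¹ s t • ∑ s', A t s' • v s' := by
          simp_rw [Finset.smul_sum, smul_smul, Finset.sum_smul]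
          rw [Finset.sum_comm]
  rw [hv]
  refine Submodule.sum_mem _ fun t _ => Submodule.smul_mem _ _ ?_
  have := h (c t)
  simpa [hA, Matrix.vandermonde] using this

lemma aeval_fix {k : Type} [Field k] {n : ℕ}
    (g : MvPolynomial (Fin (n + 1)) k) (hg : ∀ m ∈ g.support, m (Fin.last n) = 0)
    (F : Fin (n + 1) → MvPolynomial (Fin (n + 1)) k)
    (hF : ∀ a, a ≠ Fin.last n → F a = X a) :
    aeval F g = g := by
  rw [g.as_sum, map_sum]
  refine Finset.sum_congr rfl fun m hm => ?_
  rw [aeval_monomial, monomial_eq]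
  congr 1
  refine Finsupp.prod_congr fun a ha => ?_
  rw [hF a ?_]
  intro h
  rw [h] at ha
  exact (Finsupp.mem_support_iff.mp ha) (hg m hm)

lemma zfree_mul {k : Type} [Field k] {n : ℕ}
    {f g : MvPolynomial (Fin (n + 1)) k}
    (hf : ∀ m ∈ f.support, m (Fin.last n) = 0)
    (hg : ∀ m ∈ g.support, m (Fin.last n) = 0) :
    ∀ m ∈ (f * g).support, m (Fin.last n) = 0 := by
  classical
  intro m hm
  have := MvPolynomial.support_mul f g hm
  rw [Finset.mem_add] at this
  obtain ⟨a, ha, b, hb, rfl⟩ := this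
  simp [hf a ha, hg b hb]

lemma zfree_X_pow {k : Type} [Field k] {n : ℕ} (l : Fin n) (t : ℕ) :
    ∀ m ∈ ((X l.castSucc : MvPolynomial (Fin (n + 1)) k) ^ t).support,
      m (Fin.last n) = 0 := by
  intro m hm
  rw [MvPolynomial.support_X_pow] at hm
  rw [Finset.mem_singleton] at hm
  subst hm
  rw [Finsupp.single_apply_eq_zero]
  intro h
  exact absurd h.symm (Fin.castSucc_lt_last l).ne

lemma transvection_fun {k : Type} [Field k] {n : ℕ} (l : Fin n) (c : k) :
    (fun a => ∑ j, Matrix.transvection (Fin.last n) l.castSucc c a j •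
        (X j : MvPolynomial (Fin (n + 1)) k)) =
      fun a => if a = Fin.last n then X (Fin.last n) + c • X l.castSucc else X a := by
  classical
  funext a
  have hne : Fin.last n ≠ l.castSucc := (Fin.castSucc_lt_last l).ne'
  simp only [Matrix.transvection, Matrix.add_apply, Matrix.one_apply,
    Matrix.single, Matrix.of_apply, add_smul, Finset.sum_add_distrib,
    ite_smul, one_smul, zero_smul, Finset.sum_ite_eq, Finset.mem_univ, if_true]
  by_cases ha : a = Fin.last n
  · subst ha
    simp [ite_and, Finset.sum_ite_eq', ite_smul]
  · simp [ite_and, eq_comm, ha, Ne.symm ha]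

lemma transvection_parabolic {k : Type} [Field k] {n : ℕ} (l : Fin n) (c : k) :
    IsParabolicSubst (Matrix.transvection (Fin.last n) l.castSucc c) := by
  constructor
  · rw [Matrix.det_transvection_of_ne _ _ ((Fin.castSucc_lt_last l).ne') c]
    exact isUnit_one
  · intro a ha
    simp [Matrix.transvection, Matrix.single, Matrix.one_apply,
      Ne.symm ha, ha, (Fin.castSucc_lt_last l).ne, (Fin.castSucc_lt_last l).ne']

lemma step_lemma {k : Type} [Field k] [Infinite k] {p n : ℕ} [CharP k p]
    (hp : p.Prime)
    (W : Submodule k (MvPolynomial (Fin (n + 1)) k))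
    (hWstab : ∀ M, IsParabolicSubst M → ∀ f ∈ W, substMap M f ∈ W)
    (g : MvPolynomial (Fin (n + 1)) k) (hg : ∀ m ∈ g.support, m (Fin.last n) = 0)
    (i s : ℕ) (hs : ∀ j, pDigit p j s ≤ pDigit p j i)
    (hmem : g * X (Fin.last n) ^ i ∈ W) (l : Fin n) :
    g * X l.castSucc ^ s * X (Fin.last n) ^ (i - s) ∈ W := by
  classical
  have hsle : s ≤ i := (pDigit_sub p hp.two_le i s hs).1
  set v : Fin (i + 1) → MvPolynomial (Fin (n + 1)) k :=
    fun t => ((i.choose t : k)) •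
      (g * X l.castSucc ^ (t : ℕ) * X (Fin.last n) ^ (i - t)) with hv
  have hcomb : ∀ c : k, (∑ t : Fin (i + 1), c ^ (t : ℕ) • v t) ∈ W := by
    intro c
    have hmem2 := hWstab _ (transvection_parabolic l c) _ hmem
    have heq : substMap (Matrix.transvection (Fin.last n) l.castSucc c)
        (g * X (Fin.last n) ^ i) = ∑ t : Fin (i + 1), c ^ (t : ℕ) • v t := by
      calc substMap (Matrix.transvection (Fin.last n) l.castSucc c)
            (g * X (Fin.last n) ^ i)
          = g * (c • X l.castSucc + X (Fin.last n)) ^ i := by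
            simp only [substMap]
            rw [transvection_fun l c, map_mul, map_pow,
              aeval_fix g hg _ (fun a ha => if_neg ha), aeval_X, if_pos rfl,
              add_comm (X (Fin.last n))]
        _ = ∑ m ∈ Finset.range (i + 1),
              c ^ m • ((i.choose m : k) •
                (g * X l.castSucc ^ m * X (Fin.last n) ^ (i - m))) := by
            rw [add_pow, Finset.mul_sum]
            refine Finset.sum_congr rfl fun m hm => ?_
            simp only [smul_pow, Algebra.smul_def, map_pow, map_natCast]
            ring
        _ = ∑ t : Fin (i + 1), c ^ (t : ℕ) • v t := by
            rw [Fin.sum_univ_eq_sum_range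
              (fun m => c ^ m • ((i.choose m : k) •
                (g * X l.castSucc ^ m * X (Fin.last n) ^ (i - m)))) (i + 1)]
    rwa [heq] at hmem2
  have hvW := mem_of_all_comb W (i + 1) v hcomb ⟨s, by omega⟩
  have hch : ((i.choose s : k)) ≠ 0 := by
    rw [Ne, CharP.cast_eq_zero_iff k p]
    exact lucas_not_dvd hp hs
  have hfin := W.smul_mem ((i.choose s : k))⁻¹ hvW
  rw [hv] at hfin
  simp only at hfin
  rwa [inv_smul_smul₀ hch] at hfin

/-- Let `W ⊆ V_d` be a `P`-submodule.  Let `i < d` be a positive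
integer with `p`-adic digits `i_j`, and suppose `f ∈ S^{d−i}(V₁)` satisfies
`f·zⁱ ∈ W`.  Let `K ≤ i` be a nonnegative integer whose `p`-adic digits `k_j`
satisfy `k_j ≤ i_j` for all `j`, and let `x₁^{T₁}⋯x_n^{T_n}` be a monomial of
degree `i − K` such that for each `j` the `j`-th digits `t_{jl}` of the `T_l`
satisfy `t_{j1} + ⋯ + t_{jn} = i_j − k_j`.  Then
`f·x₁^{T₁}⋯x_n^{T_n}·z^K ∈ W`. -/
theorem P_submodule_monomial_closure
    (k : Type) [Field k] [IsAlgClosed k] (p n d : ℕ) [CharP k p]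
    (hp : 0 < p) (hn : 2 ≤ n)
    (W : Submodule k (MvPolynomial (Fin (n + 1)) k))
    (hW : IsPSubmodule d W)
    (i : ℕ) (hi0 : 0 < i) (hid : i < d)
    (f : MvPolynomial (Fin (n + 1)) k) (hf : IsXHomog (d - i) f)
    (hfW : f * MvPolynomial.X (Fin.last n) ^ i ∈ W)
    (K : ℕ) (hK : K ≤ i)
    (hKdig : ∀ j : ℕ, pDigit p j K ≤ pDigit p j i)
    (T : Fin n → ℕ) (hT : (∑ l, T l) = i - K)
    (hTdig : ∀ j : ℕ, (∑ l, pDigit p j (T l)) = pDigit p j i - pDigit p j K) :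
    f * (∏ l : Fin n, MvPolynomial.X (Fin.castSucc l) ^ T l) *
      MvPolynomial.X (Fin.last n) ^ K ∈ W := by
  classical
  obtain ⟨hWle, hWstab⟩ := hW
  have hpprime : p.Prime := by
    rcases CharP.char_is_prime_or_zero k p with h | h
    · exact h
    · omega
  have hzf : ∀ S : Finset (Fin n),
      ∀ m ∈ (f * ∏ l ∈ S, X (Fin.castSucc l) ^ T l).support, m (Fin.last n) = 0 := by
    intro S
    refine zfree_mul (fun m hm => (hf m hm).1) ?_
    induction S using Finset.induction_on with
    | empty =>
      intro m hm
      rw [Finset.prod_empty, MvPolynomial.mem_support_iff, MvPolynomial.coeff_one] at hm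
      rcases eq_or_ne m 0 with rfl | h0
      · simp
      · simp [Ne.symm h0] at hm
    | insert _ _ hl ih =>
      rw [Finset.prod_insert hl]
      exact zfree_mul (zfree_X_pow _ _) ih
  have hiK : K + ∑ l, T l = i := by omega
  have main : ∀ r, r ≤ n →
      (f * ∏ l ∈ Finset.univ.filter (fun l : Fin n => (l : ℕ) < r),
          X (Fin.castSucc l) ^ T l) *
        X (Fin.last n) ^
          (K + ∑ l ∈ Finset.univ.filter (fun l : Fin n => r ≤ (l : ℕ)), T l) ∈ W ∧
      ∀ j, pDigit p j
          (K + ∑ l ∈ Finset.univ.filter (fun l : Fin n => r ≤ (l : ℕ)), T l) =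
        pDigit p j K +
          ∑ l ∈ Finset.univ.filter (fun l : Fin n => r ≤ (l : ℕ)), pDigit p j (T l) := by
    intro r
    induction r with
    | zero =>
      intro _
      have h1 : Finset.univ.filter (fun l : Fin n => (l : ℕ) < 0) = ∅ := by
        simp
      have h2 : Finset.univ.filter (fun l : Fin n => 0 ≤ (l : ℕ)) = Finset.univ := by
        simp
      rw [h1, h2, Finset.prod_empty, mul_one]
      constructor
      · rw [hiK]
        exact hfW
      · intro j
        have ht := hTdig j
        have hk := hKdig j
        rw [hiK]
        omega
    | succ r ih =>
      intro hr
      obtain ⟨ihm, ihd⟩ := ih (by omega)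
      set lr : Fin n := ⟨r, by omega⟩ with hlr
      have hmemA : lr ∈ Finset.univ.filter (fun l : Fin n => r ≤ (l : ℕ)) := by
        simp [hlr]
      have hAnot : lr ∉ Finset.univ.filter (fun l : Fin n => r + 1 ≤ (l : ℕ)) := by
        simp [hlr]
      have hBnot : lr ∉ Finset.univ.filter (fun l : Fin n => (l : ℕ) < r) := by
        simp [hlr]
      have hA : Finset.univ.filter (fun l : Fin n => r ≤ (l : ℕ)) =
          insert lr (Finset.univ.filter (fun l : Fin n => r + 1 ≤ (l : ℕ))) := by
        ext x
        simp only [Finset.mem_filter, Finset.mem_univ, true_and, Finset.mem_insert,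
          hlr, Fin.ext_iff]
        omega
      have hB : Finset.univ.filter (fun l : Fin n => (l : ℕ) < r + 1) =
          insert lr (Finset.univ.filter (fun l : Fin n => (l : ℕ) < r)) := by
        ext x
        simp only [Finset.mem_filter, Finset.mem_univ, true_and, Finset.mem_insert,
          hlr, Fin.ext_iff]
        omega
      have hsum : ∑ l ∈ Finset.univ.filter (fun l : Fin n => r ≤ (l : ℕ)), T l =
          T lr + ∑ l ∈ Finset.univ.filter (fun l : Fin n => r + 1 ≤ (l : ℕ)), T l := by
        rw [hA, Finset.sum_insert hAnot]
      have hdigle : ∀ j, pDigit p j (T lr) ≤ pDigit p j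
          (K + ∑ l ∈ Finset.univ.filter (fun l : Fin n => r ≤ (l : ℕ)), T l) := by
        intro j
        rw [ihd j]
        calc pDigit p j (T lr)
            ≤ ∑ l ∈ Finset.univ.filter (fun l : Fin n => r ≤ (l : ℕ)),
                pDigit p j (T l) :=
              Finset.single_le_sum (f := fun l => pDigit p j (T l))
                (fun _ _ => Nat.zero_le _) hmemA
          _ ≤ _ := Nat.le_add_left _ _
      have hstep := step_lemma hpprime W hWstab _ (hzf _) _ (T lr) hdigle ihm lr
      have hexp : (K + ∑ l ∈ Finset.univ.filter (fun l : Fin n => r ≤ (l : ℕ)), T l)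
          - T lr =
          K + ∑ l ∈ Finset.univ.filter (fun l : Fin n => r + 1 ≤ (l : ℕ)), T l := by
        rw [hsum]
        omega
      rw [hexp] at hstep
      have hprod : (f * ∏ l ∈ Finset.univ.filter (fun l : Fin n => (l : ℕ) < r),
            X (Fin.castSucc l) ^ T l) * X (Fin.castSucc lr) ^ T lr =
          f * ∏ l ∈ Finset.univ.filter (fun l : Fin n => (l : ℕ) < r + 1),
            X (Fin.castSucc l) ^ T l := by
        rw [hB, Finset.prod_insert hBnot]
        ring
      rw [hprod] at hstep
      refine ⟨hstep, ?_⟩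
      intro j
      have hdsub := (pDigit_sub p hpprime.two_le _ _ hdigle).2 j
      rw [hexp] at hdsub
      have hbig := ihd j
      have hsumd : ∑ l ∈ Finset.univ.filter (fun l : Fin n => r ≤ (l : ℕ)),
          pDigit p j (T l) =
          pDigit p j (T lr) +
            ∑ l ∈ Finset.univ.filter (fun l : Fin n => r + 1 ≤ (l : ℕ)),
              pDigit p j (T l) := by
        rw [hA, Finset.sum_insert hAnot]
      omega
  have hfin := (main n le_rfl).1
  have h1 : Finset.univ.filter (fun l : Fin n => (l : ℕ) < n) = Finset.univ := by
    ext x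
    simp [x.isLt]
  have h2 : Finset.univ.filter (fun l : Fin n => n ≤ (l : ℕ)) = ∅ := by
    ext x
    simp only [Finset.mem_filter, Finset.mem_univ, true_and, Finset.notMem_empty,
      iff_false]
    exact Nat.not_le.mpr x.isLt
  rw [h1, h2, Finset.sum_empty] at hfin
  simpa using hfin
end
end
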